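/- For every ε ∈ [0,1] and every n ≥ 1, the n-stage repeated matching pennies game has an (ε + 2/n)-Nash equilibrium in which each player's strategy has Shannon entropy at most (1-ε)·n. -/

import Mathlib

/-- A mixed strategy over a finite action set. -/
def IsMixed {α : Type} [Fintype α] (σ : α → ℝ) : Prop :=
  (∀ a, 0 ≤ σ a) ∧ ∑ a, σ a = 1

/-- The pure (point-mass) strategy on action `a`. -/
def pureS {α : Type} [DecidableEq α] (a : α) : α → ℝ := fun b => if b = a then 1 else 0

/-- Expected payoff in a two-player game under a mixed strategy profile. -/
def expU2 {A1 A2 : Type} [Fintype A1] [Fintype A2] (u : A1 → A2 → ℝ)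
    (σ₁ : A1 → ℝ) (σ₂ : A2 → ℝ) : ℝ :=
  ∑ a, ∑ b, σ₁ a * σ₂ b * u a b

/-- Nash equilibrium of the two-player game with payoffs `u1` (row) and `u2` (column). -/
def IsNash2 {A1 A2 : Type} [Fintype A1] [Fintype A2] (u1 u2 : A1 → A2 → ℝ)
    (σ₁ : A1 → ℝ) (σ₂ : A2 → ℝ) : Prop :=
  IsMixed σ₁ ∧ IsMixed σ₂ ∧
  (∀ τ, IsMixed τ → expU2 u1 τ σ₂ ≤ expU2 u1 σ₁ σ₂) ∧
  (∀ τ, IsMixed τ → expU2 u2 σ₁ τ ≤ expU2 u2 σ₁ σ₂)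

/-- `v` is the minmax payoff of the row player: the least payoff the column player can
force on the row player (who best-responds with a pure action). -/
def RowMinmax {A1 A2 : Type} [Fintype A1] [Fintype A2] [Nonempty A1]
    (u1 : A1 → A2 → ℝ) (v : ℝ) : Prop :=
  IsLeast {x : ℝ | ∃ σ₂ : A2 → ℝ, IsMixed σ₂ ∧
    x = Finset.univ.sup' Finset.univ_nonempty (fun a₁ : A1 => ∑ b, σ₂ b * u1 a₁ b)} v

/-- `v` is the minmax payoff of the column player. -/
def ColMinmax {A1 A2 : Type} [Fintype A1] [Fintype A2] [Nonempty A2]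
    (u2 : A1 → A2 → ℝ) (v : ℝ) : Prop :=
  IsLeast {x : ℝ | ∃ σ₁ : A1 → ℝ, IsMixed σ₁ ∧
    x = Finset.univ.sup' Finset.univ_nonempty (fun a₂ : A2 => ∑ a, σ₁ a * u2 a a₂)} v

/-- Probability that, starting from history `h`, play under the behavioral profile
`(σ₁, σ₂)` follows exactly the sequence of action profiles `l`. -/
def hp2 {A1 A2 : Type} (σ₁ : List (A1 × A2) → A1 → ℝ) (σ₂ : List (A1 × A2) → A2 → ℝ) :
    List (A1 × A2) → List (A1 × A2) → ℝ
  | _, [] => 1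
  | h, a :: rest => σ₁ h a.1 * σ₂ h a.2 * hp2 σ₁ σ₂ (h ++ [a]) rest

/-- Expected average payoff (with stage payoff `u`) in the `n`-stage repeated game. -/
noncomputable def avgPay2 {A1 A2 : Type} [Fintype A1] [Fintype A2] (n : ℕ)
    (u : A1 → A2 → ℝ) (σ₁ : List (A1 × A2) → A1 → ℝ) (σ₂ : List (A1 × A2) → A2 → ℝ) : ℝ :=
  ∑ f : Fin n → A1 × A2, hp2 σ₁ σ₂ [] (List.ofFn f) * ((∑ t, u (f t).1 (f t).2) / n)

/-- ε-Nash equilibrium of the `n`-stage repeated two-player game with stage payoffs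
`u1` (row) and `u2` (column), behavioral strategies and average payoffs. -/
def IsEpsRepNash2 {A1 A2 : Type} [Fintype A1] [Fintype A2] (n : ℕ) (ε : ℝ)
    (u1 u2 : A1 → A2 → ℝ)
    (σ₁ : List (A1 × A2) → A1 → ℝ) (σ₂ : List (A1 × A2) → A2 → ℝ) : Prop :=
  (∀ h, IsMixed (σ₁ h)) ∧ (∀ h, IsMixed (σ₂ h)) ∧
  (∀ τ, (∀ h, IsMixed (τ h)) → avgPay2 n u1 τ σ₂ ≤ avgPay2 n u1 σ₁ σ₂ + ε) ∧
  (∀ τ, (∀ h, IsMixed (τ h)) → avgPay2 n u2 σ₁ τ ≤ avgPay2 n u2 σ₁ σ₂ + ε)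

/-- Nash equilibrium of the `n`-stage repeated two-player game. -/
def IsRepNash2 {A1 A2 : Type} [Fintype A1] [Fintype A2] (n : ℕ)
    (u1 u2 : A1 → A2 → ℝ)
    (σ₁ : List (A1 × A2) → A1 → ℝ) (σ₂ : List (A1 × A2) → A2 → ℝ) : Prop :=
  (∀ h, IsMixed (σ₁ h)) ∧ (∀ h, IsMixed (σ₂ h)) ∧
  (∀ τ, (∀ h, IsMixed (τ h)) → avgPay2 n u1 τ σ₂ ≤ avgPay2 n u1 σ₁ σ₂) ∧
  (∀ τ, (∀ h, IsMixed (τ h)) → avgPay2 n u2 σ₁ τ ≤ avgPay2 n u2 σ₁ σ₂)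

/-- Shannon entropy (base 2) of a mixed strategy, with the convention 0·log 0 = 0. -/
noncomputable def ent {α : Type} [Fintype α] (σ : α → ℝ) : ℝ :=
  ∑ a, -(σ a * Real.logb 2 (σ a))

/-- Shannon entropy of a behavioral strategy in the `n`-stage repeated two-player game:
the maximum over terminal histories of the summed stage entropies along the prefixes. -/
noncomputable def repEnt2 {A1 A2 α : Type} [Fintype A1] [Fintype A2] [Fintype α]
    [Nonempty A1] [Nonempty A2] (n : ℕ) (σ : List (A1 × A2) → α → ℝ) : ℝ :=
  Finset.univ.sup' Finset.univ_nonempty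
    (fun f : Fin n → A1 × A2 => ∑ t : Fin n, ent (σ ((List.ofFn f).take t)))

/-- Row payoff in matching pennies: 1 on a match, -1 on a mismatch. -/
def mpU : Bool → Bool → ℝ := fun a b => if a = b then 1 else -1

section AuxStmt13

/-- Cumulative expected payoff from a history with `m` stages to go. -/
def G13 (u : Bool → Bool → ℝ) (σ₁ σ₂ : List (Bool × Bool) → Bool → ℝ) :
    ℕ → List (Bool × Bool) → ℝ
  | 0, _ => 0
  | m+1, h => ∑ a : Bool, ∑ b : Bool,
      σ₁ h a * σ₂ h b * (u a b + G13 u σ₁ σ₂ m (h ++ [(a, b)]))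

lemma sum_fn_succ13 {β M : Type} [Fintype β] [AddCommMonoid M] (m : ℕ)
    (F : (Fin (m+1) → β) → M) :
    ∑ f : Fin (m+1) → β, F f = ∑ a : β, ∑ g : Fin m → β, F (Fin.cons a g) := by
  rw [← Fintype.sum_prod_type (f := fun p : β × (Fin m → β) => F (Fin.cons p.1 p.2))]
  exact (Fintype.sum_equiv (Fin.consEquiv fun _ => β) _ _ fun p => rfl).symm

lemma hp2_cons13 (σ₁ σ₂ : List (Bool × Bool) → Bool → ℝ) (h : List (Bool × Bool))
    (a : Bool × Bool) (m : ℕ) (g : Fin m → Bool × Bool) :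
    hp2 σ₁ σ₂ h (List.ofFn (Fin.cons a g)) =
      σ₁ h a.1 * σ₂ h a.2 * hp2 σ₁ σ₂ (h ++ [a]) (List.ofFn g) := by
  rw [List.ofFn_succ]
  simp [hp2, Fin.cons_zero, Fin.cons_succ]

lemma hp2_total13 (σ₁ σ₂ : List (Bool × Bool) → Bool → ℝ)
    (h1 : ∀ h, IsMixed (σ₁ h)) (h2 : ∀ h, IsMixed (σ₂ h)) :
    ∀ (m : ℕ) (h : List (Bool × Bool)),
      ∑ f : Fin m → Bool × Bool, hp2 σ₁ σ₂ h (List.ofFn f) = 1 := by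
  intro m
  induction m with
  | zero => intro h; simp [hp2]
  | succ m ih =>
    intro h
    rw [sum_fn_succ13]
    have step : ∀ a : Bool × Bool,
        ∑ g : Fin m → Bool × Bool, hp2 σ₁ σ₂ h (List.ofFn (Fin.cons a g)) =
          σ₁ h a.1 * σ₂ h a.2 := by
      intro a
      simp_rw [hp2_cons13]
      rw [← Finset.mul_sum, ih, mul_one]
    rw [Finset.sum_congr rfl fun a _ => step a]
    rw [Fintype.sum_prod_type, ← Finset.sum_mul_sum]
    rw [(h1 h).2, (h2 h).2, mul_one]

lemma sum_hp2_eq_G13 (u : Bool → Bool → ℝ) (σ₁ σ₂ : List (Bool × Bool) → Bool → ℝ)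
    (h1 : ∀ h, IsMixed (σ₁ h)) (h2 : ∀ h, IsMixed (σ₂ h)) :
    ∀ (m : ℕ) (h : List (Bool × Bool)),
      ∑ f : Fin m → Bool × Bool,
        hp2 σ₁ σ₂ h (List.ofFn f) * (∑ t, u (f t).1 (f t).2) = G13 u σ₁ σ₂ m h := by
  intro m
  induction m with
  | zero => intro h; simp [G13]
  | succ m ih =>
    intro h
    rw [sum_fn_succ13]
    have key : ∀ a : Bool × Bool,
        ∑ g : Fin m → Bool × Bool,
          hp2 σ₁ σ₂ h (List.ofFn (Fin.cons a g)) *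
            (∑ t, u ((Fin.cons a g : Fin (m+1) → Bool × Bool) t).1 ((Fin.cons a g : Fin (m+1) → Bool × Bool) t).2) =
          σ₁ h a.1 * σ₂ h a.2 * (u a.1 a.2 + G13 u σ₁ σ₂ m (h ++ [a])) := by
      intro a
      have e2 : ∀ g : Fin m → Bool × Bool,
          ∑ t, u ((Fin.cons a g : Fin (m+1) → Bool × Bool) t).1 ((Fin.cons a g : Fin (m+1) → Bool × Bool) t).2 =
            u a.1 a.2 + ∑ t, u (g t).1 (g t).2 := by
        intro g; rw [Fin.sum_univ_succ]; simp [Fin.cons_zero, Fin.cons_succ]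
      simp_rw [hp2_cons13, e2]
      have : ∀ g : Fin m → Bool × Bool,
          σ₁ h a.1 * σ₂ h a.2 * hp2 σ₁ σ₂ (h ++ [a]) (List.ofFn g) *
            (u a.1 a.2 + ∑ t, u (g t).1 (g t).2) =
          σ₁ h a.1 * σ₂ h a.2 *
            (hp2 σ₁ σ₂ (h ++ [a]) (List.ofFn g) * u a.1 a.2 +
             hp2 σ₁ σ₂ (h ++ [a]) (List.ofFn g) * (∑ t, u (g t).1 (g t).2)) := by
        intro g; ring
      simp_rw [this]
      rw [← Finset.mul_sum, Finset.sum_add_distrib, ← Finset.sum_mul,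
        hp2_total13 σ₁ σ₂ h1 h2, ih, one_mul]
    rw [Finset.sum_congr rfl fun a _ => key a]
    show _ = G13 u σ₁ σ₂ (m+1) h
    rw [G13, Fintype.sum_prod_type]

lemma avgPay2_eq_G13 (u : Bool → Bool → ℝ) (σ₁ σ₂ : List (Bool × Bool) → Bool → ℝ)
    (h1 : ∀ h, IsMixed (σ₁ h)) (h2 : ∀ h, IsMixed (σ₂ h)) (n : ℕ) :
    avgPay2 n u σ₁ σ₂ = G13 u σ₁ σ₂ n [] / n := by
  rw [avgPay2, ← sum_hp2_eq_G13 u σ₁ σ₂ h1 h2 n [], Finset.sum_div]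
  exact Finset.sum_congr rfl fun f _ => (mul_div_assoc _ _ _).symm

end AuxStmt13
section AuxStmt13b

/-- Row profile strategy: uniform before stage `k`, then always `true` (H). -/
noncomputable def rs1 (k : ℕ) : List (Bool × Bool) → Bool → ℝ := fun h =>
  if h.length < k then (fun _ => 1/2) else pureS true

/-- Column profile strategy: uniform before stage `k`, then alternating T,H,T,H,…. -/
noncomputable def rs2 (k : ℕ) : List (Bool × Bool) → Bool → ℝ := fun h =>
  if h.length < k then (fun _ => 1/2)
  else if (h.length - k) % 2 = 1 then pureS true else pureS false

lemma isMixed_unif : IsMixed (fun _ : Bool => (1/2 : ℝ)) := by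
  constructor
  · intro a; norm_num
  · simp

lemma isMixed_pureS (c : Bool) : IsMixed (pureS c) := by
  constructor
  · intro a; by_cases h : a = c <;> simp [pureS, h]
  · cases c <;> simp [pureS]

lemma rs1_mixed (k : ℕ) : ∀ h, IsMixed (rs1 k h) := by
  intro h; unfold rs1; split
  · exact isMixed_unif
  · exact isMixed_pureS true

lemma rs2_mixed (k : ℕ) : ∀ h, IsMixed (rs2 k h) := by
  intro h; unfold rs2; split
  · exact isMixed_unif
  · split
    · exact isMixed_pureS true
    · exact isMixed_pureS false

lemma mpU_le_one (a b : Bool) : mpU a b ≤ 1 := by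
  by_cases h : a = b <;> simp [mpU, h]

lemma neg_mpU_le_one (a b : Bool) : -(mpU a b) ≤ 1 := by
  by_cases h : a = b <;> simp [mpU, h]

/-- Deviation bound for the row player. -/
lemma Gdev_row (k : ℕ) (τ : List (Bool × Bool) → Bool → ℝ)
    (hτ : ∀ h, IsMixed (τ h)) :
    ∀ (m : ℕ) (h : List (Bool × Bool)),
      G13 mpU τ (rs2 k) m h ≤ ((min m (h.length + m - k) : ℕ) : ℝ) := by
  intro m
  induction m with
  | zero => intro h; simp [G13]
  | succ m ih =>
    intro h
    have ht0 : 0 ≤ τ h true := (hτ h).1 true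
    have hf0 : 0 ≤ τ h false := (hτ h).1 false
    have hsum : τ h true + τ h false = 1 := by
      have := (hτ h).2; simpa [Fintype.sum_bool] using this
    have hB : ∀ a b : Bool,
        G13 mpU τ (rs2 k) m (h ++ [(a, b)]) ≤
          ((min m (h.length + 1 + m - k) : ℕ) : ℝ) := by
      intro a b
      have := ih (h ++ [(a, b)])
      simpa using this
    set B : ℝ := ((min m (h.length + 1 + m - k) : ℕ) : ℝ) with hBdef
    rw [show G13 mpU τ (rs2 k) (m+1) h = ∑ a : Bool, ∑ b : Bool,
        τ h a * rs2 k h b * (mpU a b + G13 mpU τ (rs2 k) m (h ++ [(a, b)])) from rfl]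
    by_cases hk : h.length < k
    · -- uniform stage for the column player
      have hrs : ∀ b, rs2 k h b = 1/2 := by intro b; simp [rs2, hk]
      have target : B ≤ ((min (m+1) (h.length + (m+1) - k) : ℕ) : ℝ) := by
        rw [hBdef]
        exact Nat.cast_le.mpr (min_le_min (Nat.le_succ m) (le_of_eq (by omega)))
      refine le_trans ?_ target
      simp only [Fintype.sum_bool, hrs, mpU]
      have h1 := hB true true
      have h2 := hB true false
      have h3 := hB false true
      have h4 := hB false false
      norm_num
      all_goals nlinarith [mul_nonneg ht0 (sub_nonneg.mpr h1), mul_nonneg ht0 (sub_nonneg.mpr h2),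
        mul_nonneg hf0 (sub_nonneg.mpr h3), mul_nonneg hf0 (sub_nonneg.mpr h4)]
    · -- deterministic stage for the column player
      have hBm : B = (m : ℝ) := by
        rw [hBdef, min_eq_left (by omega : m ≤ h.length + 1 + m - k)]
      have htar : ((min (m+1) (h.length + (m+1) - k) : ℕ) : ℝ) = (m+1 : ℝ) := by
        rw [min_eq_left (by omega : m + 1 ≤ h.length + (m+1) - k)]
        push_cast; ring
      rw [htar]
      have key : ∀ c : Bool, ∑ a : Bool, ∑ b : Bool,
          τ h a * pureS c b * (mpU a b + G13 mpU τ (rs2 k) m (h ++ [(a, b)])) ≤ (m+1 : ℝ) := by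
        intro c
        have e : ∀ a : Bool, ∑ b : Bool,
            τ h a * pureS c b * (mpU a b + G13 mpU τ (rs2 k) m (h ++ [(a, b)])) =
            τ h a * (mpU a c + G13 mpU τ (rs2 k) m (h ++ [(a, c)])) := by
          intro a; cases c <;> simp [Fintype.sum_bool, pureS]
        rw [Finset.sum_congr rfl fun a _ => e a, Fintype.sum_bool]
        have b1 := hB true c
        have b2 := hB false c
        rw [hBm] at b1 b2
        nlinarith [mul_nonneg ht0 (sub_nonneg.mpr (add_le_add (mpU_le_one true c) b1)),
          mul_nonneg hf0 (sub_nonneg.mpr (add_le_add (mpU_le_one false c) b2)),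
          mpU_le_one true c, mpU_le_one false c]
      by_cases hp : (h.length - k) % 2 = 1
      · have hrs : rs2 k h = pureS true := by simp [rs2, hk, hp]
        rw [hrs]; exact key true
      · have hrs : rs2 k h = pureS false := by simp [rs2, hk, hp]
        rw [hrs]; exact key false

end AuxStmt13b
section AuxStmt13c

/-- Deviation bound for the column player. -/
lemma Gdev_col (k : ℕ) (τ : List (Bool × Bool) → Bool → ℝ)
    (hτ : ∀ h, IsMixed (τ h)) :
    ∀ (m : ℕ) (h : List (Bool × Bool)),
      G13 (fun a b => -(mpU a b)) (rs1 k) τ m h ≤ ((min m (h.length + m - k) : ℕ) : ℝ) := by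
  intro m
  induction m with
  | zero => intro h; simp [G13]
  | succ m ih =>
    intro h
    have ht0 : 0 ≤ τ h true := (hτ h).1 true
    have hf0 : 0 ≤ τ h false := (hτ h).1 false
    have hsum : τ h true + τ h false = 1 := by
      have := (hτ h).2; simpa [Fintype.sum_bool] using this
    have hB : ∀ a b : Bool,
        G13 (fun a b => -(mpU a b)) (rs1 k) τ m (h ++ [(a, b)]) ≤
          ((min m (h.length + 1 + m - k) : ℕ) : ℝ) := by
      intro a b
      have := ih (h ++ [(a, b)])
      simpa using this
    set B : ℝ := ((min m (h.length + 1 + m - k) : ℕ) : ℝ) with hBdef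
    rw [show G13 (fun a b => -(mpU a b)) (rs1 k) τ (m+1) h = ∑ a : Bool, ∑ b : Bool,
        rs1 k h a * τ h b * (-(mpU a b) + G13 (fun a b => -(mpU a b)) (rs1 k) τ m (h ++ [(a, b)]))
        from rfl]
    by_cases hk : h.length < k
    · have hrs : ∀ a, rs1 k h a = 1/2 := by intro a; simp [rs1, hk]
      have target : B ≤ ((min (m+1) (h.length + (m+1) - k) : ℕ) : ℝ) := by
        rw [hBdef]
        exact Nat.cast_le.mpr (min_le_min (Nat.le_succ m) (le_of_eq (by omega)))
      refine le_trans ?_ target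
      simp only [Fintype.sum_bool, hrs]
      rw [show mpU true true = 1 from by simp [mpU], show mpU false false = 1 from by simp [mpU],
        show mpU true false = -1 from by simp [mpU], show mpU false true = -1 from by simp [mpU]]
      have h1 := hB true true
      have h2 := hB true false
      have h3 := hB false true
      have h4 := hB false false
      norm_num
      all_goals nlinarith [mul_nonneg ht0 (sub_nonneg.mpr h1), mul_nonneg ht0 (sub_nonneg.mpr h3),
        mul_nonneg hf0 (sub_nonneg.mpr h2), mul_nonneg hf0 (sub_nonneg.mpr h4)]
    · have hBm : B = (m : ℝ) := by
        rw [hBdef, min_eq_left (by omega : m ≤ h.length + 1 + m - k)]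
      have htar : ((min (m+1) (h.length + (m+1) - k) : ℕ) : ℝ) = (m+1 : ℝ) := by
        rw [min_eq_left (by omega : m + 1 ≤ h.length + (m+1) - k)]
        push_cast; ring
      rw [htar]
      have hrs : rs1 k h = pureS true := by simp [rs1, hk]
      rw [hrs]
      have e : ∀ a : Bool, ∑ b : Bool,
          pureS true a * τ h b * (-(mpU a b) + G13 (fun a b => -(mpU a b)) (rs1 k) τ m (h ++ [(a, b)])) =
          pureS true a * (τ h true * (-(mpU a true) + G13 (fun a b => -(mpU a b)) (rs1 k) τ m (h ++ [(a, true)]))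
            + τ h false * (-(mpU a false) + G13 (fun a b => -(mpU a b)) (rs1 k) τ m (h ++ [(a, false)]))) := by
        intro a; simp [Fintype.sum_bool]; ring
      rw [Finset.sum_congr rfl fun a _ => e a, Fintype.sum_bool]
      simp only [pureS]
      norm_num
      have b1 := hB true true
      have b2 := hB true false
      rw [hBm] at b1 b2
      nlinarith [mul_nonneg ht0 (sub_nonneg.mpr (add_le_add (neg_mpU_le_one true true) b1)),
        mul_nonneg hf0 (sub_nonneg.mpr (add_le_add (neg_mpU_le_one true false) b2))]

/-- Value of the profile for the row player, by parity of the position past `k`. -/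
lemma Gprof (k : ℕ) :
    ∀ (m : ℕ) (h : List (Bool × Bool)),
      ((if k ≤ h.length ∧ (h.length - k) % 2 = 1 then (0:ℝ) else -1) ≤
          G13 mpU (rs1 k) (rs2 k) m h) ∧
      (G13 mpU (rs1 k) (rs2 k) m h ≤
          (if k ≤ h.length ∧ (h.length - k) % 2 = 1 then (1:ℝ) else 0)) := by
  intro m
  induction m with
  | zero => intro h; constructor <;> [skip; skip] <;> simp [G13] <;> split_ifs <;> norm_num
  | succ m ih =>
    intro h
    rw [show G13 mpU (rs1 k) (rs2 k) (m+1) h = ∑ a : Bool, ∑ b : Bool,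
        rs1 k h a * rs2 k h b * (mpU a b + G13 mpU (rs1 k) (rs2 k) m (h ++ [(a, b)]))
        from rfl]
    by_cases hk : h.length < k
    · have hr1 : ∀ a, rs1 k h a = 1/2 := by intro a; simp [rs1, hk]
      have hr2 : ∀ b, rs2 k h b = 1/2 := by intro b; simp [rs2, hk]
      have hnext : ∀ a b : Bool,
          (-1 ≤ G13 mpU (rs1 k) (rs2 k) m (h ++ [(a, b)])) ∧
          (G13 mpU (rs1 k) (rs2 k) m (h ++ [(a, b)]) ≤ 0) := by
        intro a b
        have := ih (h ++ [(a, b)])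
        have hlen : (h ++ [(a, b)]).length = h.length + 1 := by simp
        have hcond : ¬ (k ≤ (h ++ [(a, b)]).length ∧ ((h ++ [(a, b)]).length - k) % 2 = 1) := by
          rw [hlen]; omega
        rw [if_neg hcond, if_neg hcond] at this
        exact this
      have hcond : ¬ (k ≤ h.length ∧ (h.length - k) % 2 = 1) := by omega
      rw [if_neg hcond, if_neg hcond]
      simp only [Fintype.sum_bool, hr1, hr2, mpU]
      have h1 := hnext true true
      have h2 := hnext true false
      have h3 := hnext false true
      have h4 := hnext false false
      norm_num
      constructor <;> nlinarith [h1.1, h1.2, h2.1, h2.2, h3.1, h3.2, h4.1, h4.2]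
    · have hlen : ∀ a b : Bool, (h ++ [(a, b)]).length = h.length + 1 := by simp
      by_cases hp : (h.length - k) % 2 = 1
      · -- odd offset: column plays true, row plays true, stage payoff +1
        have hr1 : rs1 k h = pureS true := by simp [rs1, hk]
        have hr2 : rs2 k h = pureS true := by simp [rs2, hk, hp]
        have hnext := ih (h ++ [(true, true)])
        have hcond' : ¬ (k ≤ (h ++ [(true, true)]).length ∧
            ((h ++ [(true, true)]).length - k) % 2 = 1) := by
          rw [hlen]; omega
        rw [if_neg hcond', if_neg hcond'] at hnext
        have hcond : k ≤ h.length ∧ (h.length - k) % 2 = 1 := ⟨by omega, hp⟩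
        rw [if_pos hcond, if_pos hcond, hr1, hr2]
        simp only [Fintype.sum_bool, pureS, mpU]
        norm_num
        constructor <;> linarith [hnext.1, hnext.2]
      · -- even offset: column plays false, row plays true, stage payoff -1
        have hr1 : rs1 k h = pureS true := by simp [rs1, hk]
        have hr2 : rs2 k h = pureS false := by simp [rs2, hk, hp]
        have hnext := ih (h ++ [(true, false)])
        have hcond' : k ≤ (h ++ [(true, false)]).length ∧
            ((h ++ [(true, false)]).length - k) % 2 = 1 := by
          rw [hlen]; omega
        rw [if_pos hcond', if_pos hcond'] at hnext
        have hcond : ¬ (k ≤ h.length ∧ (h.length - k) % 2 = 1) := by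
          intro hc; exact hp hc.2
        rw [if_neg hcond, if_neg hcond, hr1, hr2]
        simp only [Fintype.sum_bool, pureS, mpU]
        norm_num
        constructor <;> linarith [hnext.1, hnext.2]

lemma avgPay2_neg (n : ℕ) (u : Bool → Bool → ℝ) (σ₁ σ₂ : List (Bool × Bool) → Bool → ℝ) :
    avgPay2 n (fun a b => -(u a b)) σ₁ σ₂ = - avgPay2 n u σ₁ σ₂ := by
  rw [avgPay2, avgPay2, ← Finset.sum_neg_distrib]
  refine Finset.sum_congr rfl fun f _ => ?_
  rw [Finset.sum_neg_distrib, neg_div, mul_neg]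

end AuxStmt13c
section AuxStmt13d

lemma ent_unif13 : ent (fun _ : Bool => (1/2 : ℝ)) = 1 := by
  have h : Real.logb 2 (1/2 : ℝ) = -1 := by
    rw [one_div, Real.logb_inv, Real.logb_self_eq_one] <;> norm_num
  simp [ent, Fintype.sum_bool, h]

lemma ent_unif13' : ent (fun _ : Bool => (2⁻¹ : ℝ)) = 1 := by
  have e : (fun _ : Bool => (2⁻¹:ℝ)) = fun _ => 1/2 := by norm_num
  rw [e, ent_unif13]

lemma ent_pureS13 (c : Bool) : ent (pureS c) = 0 := by
  cases c <;> simp [ent, pureS, Fintype.sum_bool]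

lemma repEnt2_le13 (k n : ℕ) (σ : List (Bool × Bool) → Bool → ℝ)
    (hσ : ∀ h : List (Bool × Bool), ent (σ h) ≤ if h.length < k then (1:ℝ) else 0) :
    repEnt2 n σ ≤ (k : ℝ) := by
  apply Finset.sup'_le
  intro f _
  calc ∑ t : Fin n, ent (σ ((List.ofFn f).take t))
      ≤ ∑ t : Fin n, (if (t : ℕ) < k then (1:ℝ) else 0) := by
        refine Finset.sum_le_sum fun t _ => ?_
        have := hσ ((List.ofFn f).take t)
        rwa [List.length_take, List.length_ofFn, min_eq_left t.2.le] at this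
    _ = ((Finset.univ.filter fun t : Fin n => (t : ℕ) < k).card : ℝ) := by
        rw [Finset.sum_boole]
    _ ≤ (k : ℝ) := by
        have hcard : (Finset.univ.filter fun t : Fin n => (t : ℕ) < k).card ≤
            (Finset.range k).card :=
          Finset.card_le_card_of_injOn (fun t => (t : ℕ))
            (fun a ha => by
              simp only [Finset.coe_filter, Finset.mem_coe, Finset.mem_filter, Set.mem_setOf_eq] at ha
              exact Finset.mem_range.mpr ha.2)
            (Fin.val_injective.injOn)
        rw [Finset.card_range] at hcard
        exact_mod_cast hcard

lemma ent_rs1 (k : ℕ) (h : List (Bool × Bool)) :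
    ent (rs1 k h) ≤ if h.length < k then (1:ℝ) else 0 := by
  by_cases hl : h.length < k <;> simp [rs1, hl, ent_unif13, ent_unif13', ent_pureS13]

lemma ent_rs2 (k : ℕ) (h : List (Bool × Bool)) :
    ent (rs2 k h) ≤ if h.length < k then (1:ℝ) else 0 := by
  by_cases hl : h.length < k
  · simp [rs2, hl, ent_unif13, ent_unif13']
  · by_cases hp : (h.length - k) % 2 = 1 <;> simp [rs2, hl, hp, ent_pureS13]

end AuxStmt13d
theorem stmt_13 (ε : ℝ) (hε0 : 0 ≤ ε) (hε1 : ε ≤ 1) (n : ℕ) (hn : 1 ≤ n) :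
    ∃ σ₁ σ₂ : List (Bool × Bool) → Bool → ℝ,
      IsEpsRepNash2 n (ε + 2 / n) mpU (fun a b => -(mpU a b)) σ₁ σ₂ ∧
      repEnt2 n σ₁ ≤ (1 - ε) * n ∧ repEnt2 n σ₂ ≤ (1 - ε) * n := by
  set k := Nat.floor ((1 - ε) * n) with hkdef
  have hn0 : (0:ℝ) < n := by exact_mod_cast hn
  have hk_le : (k : ℝ) ≤ (1 - ε) * n :=
    Nat.floor_le (mul_nonneg (by linarith) (Nat.cast_nonneg n))
  have hk_lt : (1 - ε) * n < k + 1 := Nat.lt_floor_add_one _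
  -- bound on the casted min appearing in the deviation lemmas
  have hkb : ((min n (n - k) : ℕ) : ℝ) ≤ ε * n + 1 := by
    rcases le_or_gt k n with hkn | hkn
    · calc ((min n (n - k) : ℕ) : ℝ) ≤ ((n - k : ℕ) : ℝ) := by
            exact_mod_cast Nat.cast_le.mpr (min_le_right _ _)
      _ = (n : ℝ) - k := by rw [Nat.cast_sub hkn]
      _ ≤ ε * n + 1 := by nlinarith
    · have : min n (n - k) = 0 := by omega
      rw [this]
      push_cast
      nlinarith
  -- profile value for the row player
  have hc0 : ¬ (k ≤ ([] : List (Bool × Bool)).length ∧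
      (([] : List (Bool × Bool)).length - k) % 2 = 1) := by
    simp only [List.length_nil]
    omega
  have hprof := Gprof k n []
  rw [if_neg hc0, if_neg hc0] at hprof
  set Gp : ℝ := G13 mpU (rs1 k) (rs2 k) n [] with hGp
  have hGp1 : -1 ≤ Gp := hprof.1
  have hGp2 : Gp ≤ 0 := hprof.2
  have havg1 : avgPay2 n mpU (rs1 k) (rs2 k) = Gp / n :=
    avgPay2_eq_G13 mpU (rs1 k) (rs2 k) (rs1_mixed k) (rs2_mixed k) n
  have h2n : (2:ℝ) / n = 2 * (1 / n) := by ring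
  refine ⟨rs1 k, rs2 k, ⟨rs1_mixed k, rs2_mixed k, ?_, ?_⟩, ?_, ?_⟩
  · -- row deviations
    intro τ hτ
    rw [avgPay2_eq_G13 mpU τ (rs2 k) hτ (rs2_mixed k) n, havg1]
    have hdev := Gdev_row k τ hτ n []
    simp only [List.length_nil, Nat.zero_add] at hdev
    have h1 : G13 mpU τ (rs2 k) n [] ≤ ε * n + 1 := le_trans hdev hkb
    have h3 : G13 mpU τ (rs2 k) n [] / n ≤ (ε * n + 1) / n := by gcongr
    have h4 : (ε * n + 1) / n = ε + 1 / n := by field_simp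
    have h5 : -1 / n ≤ Gp / n := by gcongr
    have h6 : (-1 : ℝ) / n = -(1 / n) := by ring
    rw [h4] at h3
    rw [h6] at h5
    rw [h2n]
    linarith
  · -- column deviations
    intro τ hτ
    rw [avgPay2_eq_G13 _ (rs1 k) τ (rs1_mixed k) hτ n,
      avgPay2_neg n mpU (rs1 k) (rs2 k), havg1]
    have hdev := Gdev_col k τ hτ n []
    simp only [List.length_nil, Nat.zero_add] at hdev
    have h1 : G13 (fun a b => -(mpU a b)) (rs1 k) τ n [] ≤ ε * n + 1 := le_trans hdev hkb
    have h3 : G13 (fun a b => -(mpU a b)) (rs1 k) τ n [] / n ≤ (ε * n + 1) / n := by gcongr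
    have h4 : (ε * n + 1) / n = ε + 1 / n := by field_simp
    have h5 : Gp / n ≤ 0 / n := by gcongr
    rw [h4] at h3
    rw [zero_div] at h5
    have h7 : (0:ℝ) < 1 / n := by positivity
    rw [h2n]
    linarith
  · exact le_trans (repEnt2_le13 k n (rs1 k) (ent_rs1 k)) hk_le
  · exact le_trans (repEnt2_le13 k n (rs2 k) (ent_rs2 k)) hk_le
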